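/- Let u: ℝ² → ℝ be four times continuously differentiable and let (x,y) ∈ ℝ². Then the higher-order dangling-node approximation of the mixed derivative u_xy is second-order accurate: the quantity [u(x+h, y+h/2) + u(x−h, y−h/2) − u(x−h, y+h/2) − u(x+h, y−h/2)]/(2h²) − u_xy(x,y) is O(h²) as h → 0⁺; that is, there exist constants C > 0 and h₀ > 0 such that its absolute value is at most C h² for all 0 < h < h₀. -/

import Mathlib

open Set

lemma itFD_shift (u : ℝ × ℝ → ℝ) (hu : ContDiff ℝ 4 u) (p : ℝ × ℝ) {m : ℕ}
    (hm : m ≤ 4) (z : ℝ × ℝ) :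
    iteratedFDeriv ℝ m (fun w => u (p + w)) z = iteratedFDeriv ℝ m u (p + z) := by
  have H := contDiff_iff_ftaylorSeries.mp hu
  have Q : HasFTaylorSeriesUpTo 4 (fun w => u (p + w))
      (fun w => ftaylorSeries ℝ u (p + w)) := by
    refine ⟨fun w => H.zero_eq (p + w), ?_, fun k hk => (H.cont k hk).comp
      (continuous_const.add continuous_id)⟩
    intro k hk w
    have h1 := H.fderiv k hk (p + w)
    have h2 : HasFDerivAt (fun w : ℝ × ℝ => p + w)
        (ContinuousLinearMap.id ℝ (ℝ × ℝ)) w := (hasFDerivAt_id w).const_add p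
    have h3 := h1.comp w h2
    rw [ContinuousLinearMap.comp_id] at h3
    exact h3
  exact (Q.eq_iteratedFDeriv (by exact_mod_cast Nat.cast_le.mpr hm) z).symm

lemma line_contDiff (u : ℝ × ℝ → ℝ) (hu : ContDiff ℝ 4 u) (p v : ℝ × ℝ) :
    ContDiff ℝ 4 (fun t : ℝ => u (p + t • v)) :=
  hu.comp (contDiff_const.add (contDiff_id.smul contDiff_const))

lemma line_iteratedDeriv (u : ℝ × ℝ → ℝ) (hu : ContDiff ℝ 4 u) (p v : ℝ × ℝ) {m : ℕ}
    (hm : m ≤ 4) (t : ℝ) :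
    iteratedDeriv m (fun t : ℝ => u (p + t • v)) t
      = iteratedFDeriv ℝ m u (p + t • v) (fun _ => v) := by
  set L : ℝ →L[ℝ] ℝ × ℝ := (ContinuousLinearMap.id ℝ ℝ).smulRight v with hL
  have hw : ContDiff ℝ 4 (fun w : ℝ × ℝ => u (p + w)) :=
    hu.comp (contDiff_const.add contDiff_id)
  have hcomp : (fun t : ℝ => u (p + t • v)) = (fun w => u (p + w)) ∘ L := by
    funext s; simp [hL, Function.comp]
  rw [iteratedDeriv_eq_iteratedFDeriv, hcomp,
    L.iteratedFDeriv_comp_right hw t (by exact_mod_cast Nat.cast_le.mpr hm)]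
  rw [ContinuousMultilinearMap.compContinuousLinearMap_apply]
  rw [itFD_shift u hu p hm]
  simp [hL]

lemma iDW_eq (F : ℝ → ℝ) (hF : ContDiff ℝ 4 F) {m : ℕ} (hm : m ≤ 4) {t : ℝ}
    (ht : t ∈ Icc (0:ℝ) 1) :
    iteratedDerivWithin m F (Icc 0 1) t = iteratedDeriv m F t := by
  rw [iteratedDerivWithin_eq_iteratedFDerivWithin, iteratedDeriv_eq_iteratedFDeriv]
  congr 1
  exact (((contDiff_iff_ftaylorSeries.mp hF).hasFTaylorSeriesUpToOn
    _).eq_iteratedFDerivWithin_of_uniqueDiffOn (by exact_mod_cast Nat.cast_le.mpr hm)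
    (uniqueDiffOn_Icc zero_lt_one) ht).symm

lemma itFD_sub_apply {m : ℕ} {f g : ℝ → ℝ} (hf : ContDiff ℝ m f) (hg : ContDiff ℝ m g) (t : ℝ) :
    iteratedFDeriv ℝ m (fun s => f s - g s) t = iteratedFDeriv ℝ m f t - iteratedFDeriv ℝ m g t := by
  have h1 : (fun s => f s - g s) = fun s => f s + -g s := by funext s; ring
  have h2 : iteratedFDeriv ℝ m (fun s => -g s) t = -iteratedFDeriv ℝ m g t :=
    iteratedFDeriv_neg_apply (f := g)
  rw [h1, iteratedFDeriv_add_apply' hf.contDiffAt hg.neg.contDiffAt, h2, ← sub_eq_add_neg]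

lemma itFD_comb {m : ℕ} {a b c d : ℝ → ℝ} (ha : ContDiff ℝ m a) (hb : ContDiff ℝ m b)
    (hc : ContDiff ℝ m c) (hd : ContDiff ℝ m d) (t : ℝ) :
    iteratedDeriv m (fun s => a s + b s - c s - d s) t =
      iteratedDeriv m a t + iteratedDeriv m b t - iteratedDeriv m c t - iteratedDeriv m d t := by
  rw [iteratedDeriv_eq_iteratedFDeriv, itFD_sub_apply ((ha.add hb).sub hc) hd,
    itFD_sub_apply (ha.add hb) hc, iteratedFDeriv_add_apply' ha.contDiffAt hb.contDiffAt]
  simp [iteratedDeriv_eq_iteratedFDeriv]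


set_option maxHeartbeats 1000000 in
/-- The dangling-node approximation of the mixed derivative
`u_xy` is second-order accurate for `C⁴` functions. -/
theorem dangling_node_uxy_second_order
    (u : ℝ × ℝ → ℝ) (hu : ContDiff ℝ 4 u) (x y : ℝ) :
    ∃ C > (0:ℝ), ∃ h₀ > (0:ℝ), ∀ h : ℝ, 0 < h → h < h₀ →
      |(u (x + h, y + h/2) + u (x - h, y - h/2) - u (x - h, y + h/2)
          - u (x + h, y - h/2)) / (2 * h^2)
        - iteratedFDeriv ℝ 2 u (x, y) ![(1, 0), (0, 1)]| ≤ C * h^2 := by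
  set p : ℝ × ℝ := (x, y) with hp
  obtain ⟨M, hM⟩ := (isCompact_closedBall p 2).exists_bound_of_continuousOn
    ((ContDiff.continuous_iteratedFDeriv (m := 4) (by norm_num) hu).continuousOn)
  have hM0 : 0 ≤ M := le_trans (norm_nonneg _) (hM p (Metric.mem_closedBall_self (by norm_num)))
  refine ⟨M + 1, by positivity, 1, one_pos, fun h h0 h1 => ?_⟩
  set v₁ : ℝ × ℝ := (h, h/2) with hv₁
  set v₂ : ℝ × ℝ := (-h, h/2) with hv₂
  set F : ℝ → ℝ := fun t => u (p + t • v₁) + u (p + t • (-v₁)) - u (p + t • v₂)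
    - u (p + t • (-v₂)) with hFdef
  have hFc : ContDiff ℝ 4 F :=
    (((line_contDiff u hu p v₁).add (line_contDiff u hu p (-v₁))).sub
      (line_contDiff u hu p v₂)).sub (line_contDiff u hu p (-v₂))
  have hder : ∀ m : ℕ, m ≤ 4 → ∀ t : ℝ,
      iteratedDeriv m F t =
        iteratedFDeriv ℝ m u (p + t • v₁) (fun _ => v₁)
        + iteratedFDeriv ℝ m u (p + t • (-v₁)) (fun _ => (-v₁))
        - iteratedFDeriv ℝ m u (p + t • v₂) (fun _ => v₂)
        - iteratedFDeriv ℝ m u (p + t • (-v₂)) (fun _ => (-v₂)) := by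
    intro m hm t
    have hc : ∀ v : ℝ × ℝ, ContDiff ℝ (m : ℕ∞) (fun t : ℝ => u (p + t • v)) :=
      fun v => (line_contDiff u hu p v).of_le (by exact_mod_cast Nat.cast_le.mpr hm)
    calc iteratedDeriv m F t
        = iteratedDeriv m (fun s : ℝ => u (p + s • v₁)) t
          + iteratedDeriv m (fun s : ℝ => u (p + s • (-v₁))) t
          - iteratedDeriv m (fun s : ℝ => u (p + s • v₂)) t
          - iteratedDeriv m (fun s : ℝ => u (p + s • (-v₂))) t :=
        itFD_comb (hc v₁) (hc (-v₁)) (hc v₂) (hc (-v₂)) t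
      _ = _ := by
        rw [line_iteratedDeriv u hu p v₁ hm, line_iteratedDeriv u hu p (-v₁) hm,
          line_iteratedDeriv u hu p v₂ hm, line_iteratedDeriv u hu p (-v₂) hm]
  have hnv : ∀ v : ℝ × ℝ, ‖v‖ ≤ h → ∀ t ∈ Icc (0:ℝ) 1,
      ‖iteratedFDeriv ℝ 4 u (p + t • v) (fun _ => v)‖ ≤ M * h^4 := by
    intro v hv t ht
    have hmem : p + t • v ∈ Metric.closedBall p 2 := by
      rw [Metric.mem_closedBall]
      have hd : dist (p + t • v) p = ‖t • v‖ := by simp [dist_eq_norm]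
      rw [hd, norm_smul]
      have h1 : ‖t‖ ≤ 1 := by rw [Real.norm_eq_abs, abs_of_nonneg ht.1]; exact ht.2
      have := mul_le_mul h1 hv (norm_nonneg _) zero_le_one
      simpa using this.trans (by linarith)
    calc ‖iteratedFDeriv ℝ 4 u (p + t • v) (fun _ => v)‖
        ≤ ‖iteratedFDeriv ℝ 4 u (p + t • v)‖ * ∏ _i : Fin 4, ‖v‖ :=
          ContinuousMultilinearMap.le_opNorm _ _
      _ ≤ M * h^4 := by
          rw [Finset.prod_const]
          simp only [Finset.card_univ, Fintype.card_fin]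
          exact mul_le_mul (hM _ hmem) (pow_le_pow_left₀ (norm_nonneg v) hv 4)
            (by positivity) hM0
  have hn1 : ‖v₁‖ ≤ h := by
    rw [hv₁, Prod.norm_def]
    apply max_le <;> rw [Real.norm_eq_abs] <;> rw [abs_of_nonneg (by linarith)] <;> linarith
  have hn2 : ‖v₂‖ ≤ h := by
    rw [hv₂, Prod.norm_def]
    apply max_le
    · rw [Real.norm_eq_abs, abs_of_nonpos (by linarith)]; linarith
    · rw [Real.norm_eq_abs, abs_of_nonneg (by linarith)]; linarith
  have hn1' : ‖-v₁‖ ≤ h := by rwa [norm_neg]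
  have hn2' : ‖-v₂‖ ≤ h := by rwa [norm_neg]
  have hbound : ∀ t ∈ Icc (0:ℝ) 1,
      ‖iteratedDerivWithin 4 F (Icc 0 1) t‖ ≤ 4 * (M * h^4) := by
    intro t ht
    rw [iDW_eq F hFc le_rfl ht, hder 4 le_rfl t]
    have b1 := hnv v₁ hn1 t ht
    have b2 := hnv (-v₁) hn1' t ht
    have b3 := hnv v₂ hn2 t ht
    have b4 := hnv (-v₂) hn2' t ht
    calc ‖iteratedFDeriv ℝ 4 u (p + t • v₁) (fun _ => v₁)
        + iteratedFDeriv ℝ 4 u (p + t • (-v₁)) (fun _ => (-v₁))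
        - iteratedFDeriv ℝ 4 u (p + t • v₂) (fun _ => v₂)
        - iteratedFDeriv ℝ 4 u (p + t • (-v₂)) (fun _ => (-v₂))‖
        ≤ ‖iteratedFDeriv ℝ 4 u (p + t • v₁) (fun _ => v₁)
            + iteratedFDeriv ℝ 4 u (p + t • (-v₁)) (fun _ => (-v₁))
            - iteratedFDeriv ℝ 4 u (p + t • v₂) (fun _ => v₂)‖
          + ‖iteratedFDeriv ℝ 4 u (p + t • (-v₂)) (fun _ => (-v₂))‖ := norm_sub_le _ _
      _ ≤ ‖iteratedFDeriv ℝ 4 u (p + t • v₁) (fun _ => v₁)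
            + iteratedFDeriv ℝ 4 u (p + t • (-v₁)) (fun _ => (-v₁))‖
          + ‖iteratedFDeriv ℝ 4 u (p + t • v₂) (fun _ => v₂)‖
          + ‖iteratedFDeriv ℝ 4 u (p + t • (-v₂)) (fun _ => (-v₂))‖ := by
          gcongr; exact norm_sub_le _ _
      _ ≤ ‖iteratedFDeriv ℝ 4 u (p + t • v₁) (fun _ => v₁)‖
          + ‖iteratedFDeriv ℝ 4 u (p + t • (-v₁)) (fun _ => (-v₁))‖
          + ‖iteratedFDeriv ℝ 4 u (p + t • v₂) (fun _ => v₂)‖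
          + ‖iteratedFDeriv ℝ 4 u (p + t • (-v₂)) (fun _ => (-v₂))‖ := by
          gcongr; exact norm_add_le _ _
      _ ≤ 4 * (M * h^4) := by linarith
  have taylor := taylor_mean_remainder_bound (f := F) (a := 0) (b := 1) (n := 3)
    zero_le_one (by exact_mod_cast hFc.contDiffOn) (right_mem_Icc.mpr zero_le_one) hbound
  have hneg : ∀ (k : ℕ) (v : ℝ × ℝ), iteratedFDeriv ℝ k u p (fun _ => -v)
      = (-1:ℝ)^k • iteratedFDeriv ℝ k u p (fun _ => v) := by
    intro k v
    have e : (fun _ : Fin k => -v) = fun _ : Fin k => (-1:ℝ) • v := by funext i; simp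
    rw [e, (iteratedFDeriv ℝ k u p).map_smul_univ]
    simp
  have hId : ∀ k : ℕ, k ≤ 4 → iteratedDeriv k F 0
      = iteratedFDeriv ℝ k u p (fun _ => v₁) + iteratedFDeriv ℝ k u p (fun _ => -v₁)
        - iteratedFDeriv ℝ k u p (fun _ => v₂) - iteratedFDeriv ℝ k u p (fun _ => -v₂) := by
    intro k hk
    rw [hder k hk 0]; simp
  set B := fderiv ℝ (fderiv ℝ u) p with hB
  have h2app : ∀ v : ℝ × ℝ, iteratedFDeriv ℝ 2 u p (fun _ => v) = B v v := by
    intro v; rw [iteratedFDeriv_two_apply, hB]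
  have hsymm : B (1,0) (0,1) = B (0,1) (1,0) :=
    (hu.contDiffAt.isSymmSndFDerivAt (by norm_num)).eq _ _
  have hexp : ∀ a b : ℝ, B (a, b) (a, b)
      = a*a * B (1,0) (1,0) + a*b * B (1,0) (0,1) + b*a * B (0,1) (1,0)
        + b*b * B (0,1) (0,1) := by
    intro a b
    have hab : ((a,b) : ℝ×ℝ) = a • ((1,0) : ℝ×ℝ) + b • ((0,1) : ℝ×ℝ) := by
      simp [Prod.ext_iff]
    rw [hab]
    simp only [map_add, map_smul, ContinuousLinearMap.add_apply,
      ContinuousLinearMap.coe_smul', Pi.smul_apply, smul_eq_mul]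
    ring
  have hd0 : iteratedDeriv 0 F 0 = 0 := by
    rw [hId 0 (by norm_num)]; simp
  have hd1 : iteratedDeriv 1 F 0 = 0 := by
    rw [hId 1 (by norm_num), hneg 1 v₁, hneg 1 v₂]
    simp
  have hd3 : iteratedDeriv 3 F 0 = 0 := by
    rw [hId 3 (by norm_num), hneg 3 v₁, hneg 3 v₂]
    norm_num
  have hd2 : iteratedDeriv 2 F 0 = 4 * h^2 * B (1,0) (0,1) := by
    rw [hId 2 (by norm_num), hneg 2 v₁, hneg 2 v₂]
    simp only [h2app, hv₁, hv₂, neg_one_sq, one_smul]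
    rw [hexp h (h/2), hexp (-h) (h/2), hsymm]
    ring
  have htay : taylorWithinEval F 3 (Icc 0 1) 0 1 = 2 * h^2 * B (1,0) (0,1) := by
    rw [taylor_within_apply, Finset.sum_range_succ, Finset.sum_range_succ,
      Finset.sum_range_succ, Finset.sum_range_one,
      iDW_eq F hFc (by norm_num) (left_mem_Icc.mpr zero_le_one),
      iDW_eq F hFc (by norm_num) (left_mem_Icc.mpr zero_le_one),
      iDW_eq F hFc (by norm_num) (left_mem_Icc.mpr zero_le_one),
      iDW_eq F hFc (by norm_num) (left_mem_Icc.mpr zero_le_one),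
      hd0, hd1, hd2, hd3]
    norm_num [Nat.factorial]
    ring
  have e1 : p + (1:ℝ) • v₁ = (x + h, y + h/2) := by
    rw [hp, hv₁]; simp [Prod.ext_iff]
  have e2 : p + (1:ℝ) • (-v₁) = (x - h, y - h/2) := by
    rw [hp, hv₁]; simp [Prod.ext_iff]; constructor <;> ring
  have e3 : p + (1:ℝ) • v₂ = (x - h, y + h/2) := by
    rw [hp, hv₂]; simp [Prod.ext_iff]; ring
  have e4 : p + (1:ℝ) • (-v₂) = (x + h, y - h/2) := by
    rw [hp, hv₂]; simp [Prod.ext_iff]; constructor <;> ring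
  have hF1 : F 1 = u (x + h, y + h/2) + u (x - h, y - h/2) - u (x - h, y + h/2)
      - u (x + h, y - h/2) := by
    rw [hFdef]
    simp only []
    rw [e1, e2, e3, e4]
  have huxy : iteratedFDeriv ℝ 2 u p ![(1,0),(0,1)] = B (1,0) (0,1) := by
    rw [iteratedFDeriv_two_apply, hB]
    simp
  have h2pos : (0:ℝ) < 2 * h^2 := by positivity
  have key : (u (x + h, y + h/2) + u (x - h, y - h/2) - u (x - h, y + h/2)
      - u (x + h, y - h/2)) / (2 * h^2) - iteratedFDeriv ℝ 2 u p ![(1,0),(0,1)]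
      = (F 1 - taylorWithinEval F 3 (Icc 0 1) 0 1) / (2*h^2) := by
    rw [huxy, htay, hF1]
    field_simp
  rw [key, abs_div, abs_of_pos h2pos]
  have tb : |F 1 - taylorWithinEval F 3 (Icc 0 1) 0 1| ≤ 4*(M*h^4) / 6 := by
    have t2 := taylor
    rw [Real.norm_eq_abs] at t2
    calc |F 1 - taylorWithinEval F 3 (Icc 0 1) 0 1|
        ≤ 4*(M*h^4) * (1 - 0)^(3+1) / (Nat.factorial 3 : ℝ) := t2
      _ = 4*(M*h^4) / 6 := by norm_num [Nat.factorial]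
  have hh2 : (0:ℝ) < h^2 := by positivity
  calc |F 1 - taylorWithinEval F 3 (Icc 0 1) 0 1| / (2*h^2)
      ≤ (4*(M*h^4) / 6) / (2*h^2) := by gcongr
    _ ≤ (M + 1) * h^2 := by
        rw [div_le_iff₀ h2pos]
        have : h^4 = h^2 * h^2 := by ring
        nlinarith [mul_nonneg hM0 hh2.le, mul_nonneg (mul_nonneg hM0 hh2.le) hh2.le]
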